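/- arXiv:1204.2843 — 3 statements merged into one kernel-verified Lean document; each statement's English description precedes it below -/
import Mathlib

section
/- If a subgroup G ≤ Aut(X*) is contracting, then every element of N_1 has finite order; that is, every g ∈ G for which there exists a non-empty word v ∈ X* with g|_v = g and g(v) = v is a torsion element of G. -/
/-- The automorphism group of the rooted `d`-ary tree `X*` (words over `Fin d`),
realized as the subgroup of permutations of `List (Fin d)` preserving word length
and the prefix relation. -/
def treeAutGroup (d : ℕ) : Subgroup (Equiv.Perm (List (Fin d))) where
  carrier := {g | (∀ v, (g v).length = v.length) ∧ ∀ v w, v <+: w ↔ g v <+: g w}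
  one_mem' := ⟨fun _ => rfl, fun _ _ => Iff.rfl⟩
  mul_mem' := by
    rintro a b ⟨ha1, ha2⟩ ⟨hb1, hb2⟩
    refine ⟨fun v => ?_, fun v w => ?_⟩
    · simpa [Equiv.Perm.mul_apply] using (ha1 (b v)).trans (hb1 v)
    · simpa [Equiv.Perm.mul_apply] using (hb2 v w).trans (ha2 (b v) (b w))
  inv_mem' := by
    rintro g ⟨h1, h2⟩
    refine ⟨fun v => ?_, fun v w => ?_⟩
    · conv_rhs => rw [← Equiv.apply_symm_apply g v]
      exact (h1 _).symm
    · have := (h2 (g⁻¹ v) (g⁻¹ w)).symm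
      simpa [Equiv.apply_symm_apply] using this

/-- An automorphism of the rooted `d`-ary tree. -/
abbrev TreeAut (d : ℕ) : Type := ↥(treeAutGroup d)

namespace TreeAut

variable {d : ℕ}

theorem length_apply (g : TreeAut d) (v : List (Fin d)) :
    ((g : Equiv.Perm (List (Fin d))) v).length = v.length := g.2.1 v

theorem prefix_iff (g : TreeAut d) (v w : List (Fin d)) :
    v <+: w ↔ (g : Equiv.Perm (List (Fin d))) v <+: (g : Equiv.Perm (List (Fin d))) w :=
  g.2.2 v w

theorem apply_append (g : TreeAut d) (v w : List (Fin d)) :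
    (g : Equiv.Perm (List (Fin d))) (v ++ w) =
      (g : Equiv.Perm (List (Fin d))) v ++
        (((g : Equiv.Perm (List (Fin d))) (v ++ w)).drop v.length) := by
  obtain ⟨t, ht⟩ := (g.prefix_iff v (v ++ w)).mp ⟨w, rfl⟩
  rw [← ht, List.drop_left' (g.length_apply v)]

/-- The restriction of a tree automorphism at the vertex `v`, as a permutation of words:
the unique map with `g (v ++ w) = g v ++ (restrictPerm g v) w`. -/
def restrictPerm (g : TreeAut d) (v : List (Fin d)) : Equiv.Perm (List (Fin d)) where
  toFun w := (((g : Equiv.Perm (List (Fin d)))) (v ++ w)).drop v.length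
  invFun w := (((g : Equiv.Perm (List (Fin d))).symm)
      (((g : Equiv.Perm (List (Fin d))) v) ++ w)).drop v.length
  left_inv w := by
    dsimp only
    have h := (g.apply_append v w).symm
    rw [h, Equiv.symm_apply_apply, List.drop_left]
  right_inv w := by
    dsimp only
    have hpre : v <+: (g : Equiv.Perm (List (Fin d))).symm
        ((g : Equiv.Perm (List (Fin d))) v ++ w) := by
      have := (g.prefix_iff v ((g : Equiv.Perm (List (Fin d))).symm
        ((g : Equiv.Perm (List (Fin d))) v ++ w))).symm
      rw [Equiv.apply_symm_apply] at this
      exact this.mp ⟨w, rfl⟩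
    obtain ⟨u, hu⟩ := hpre
    rw [← hu, List.drop_left]
    have h2 : (g : Equiv.Perm (List (Fin d))) (v ++ u) =
        (g : Equiv.Perm (List (Fin d))) v ++ w := by rw [hu, Equiv.apply_symm_apply]
    rw [h2, List.drop_left' (g.length_apply v)]

theorem restrictPerm_mem (g : TreeAut d) (v : List (Fin d)) :
    restrictPerm g v ∈ treeAutGroup d := by
  constructor
  · intro w
    show (((g : Equiv.Perm (List (Fin d))) (v ++ w)).drop v.length).length = w.length
    rw [List.length_drop, g.length_apply, List.length_append]
    omega
  · intro w w'
    show w <+: w' ↔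
      ((g : Equiv.Perm (List (Fin d))) (v ++ w)).drop v.length <+:
        ((g : Equiv.Perm (List (Fin d))) (v ++ w')).drop v.length
    calc w <+: w' ↔ v ++ w <+: v ++ w' := (List.prefix_append_right_inj v).symm
      _ ↔ (g : Equiv.Perm (List (Fin d))) (v ++ w) <+:
            (g : Equiv.Perm (List (Fin d))) (v ++ w') := g.prefix_iff _ _
      _ ↔ _ := by
            conv_lhs => rw [g.apply_append v w, g.apply_append v w']
            exact List.prefix_append_right_inj _

/-- The restriction `g|_v` of a tree automorphism `g` at a vertex `v`, as a tree
automorphism: the unique automorphism with `g (v ++ w) = g v ++ g|_v w` for all `w`. -/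
def restrict (g : TreeAut d) (v : List (Fin d)) : TreeAut d :=
  ⟨restrictPerm g v, restrictPerm_mem g v⟩

/-- `g` fixes the end (infinite word) `w` of the tree: it fixes every finite initial
segment of `w`. -/
def FixesEnd (g : TreeAut d) (w : ℕ → Fin d) : Prop :=
  ∀ n : ℕ, (g : Equiv.Perm (List (Fin d))) ((List.range n).map w) = (List.range n).map w

end TreeAut

/-- `g` is spherically transitive: the cyclic group it generates acts transitively on
the words of length `n`, for every `n ≥ 1`. -/
def SphericallyTransitive {d : ℕ} (g : TreeAut d) : Prop :=
  ∀ n : ℕ, 1 ≤ n → ∀ v w : List (Fin d), v.length = n → w.length = n →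
    ∃ k : ℤ, ((g ^ k : TreeAut d) : Equiv.Perm (List (Fin d))) v = w

/-- The `n`-th level of the tree: words of length `n`. -/
abbrev Level (d n : ℕ) : Type := {v : List (Fin d) // v.length = n}

instance Level.finite (d n : ℕ) : Finite (Level d n) := by
  have key : ∀ v : Level d n,
      v.1 = List.ofFn (fun i : Fin n => v.1.get (Fin.cast v.2.symm i)) := by
    intro v
    refine List.ext_get (by simp [v.2]) ?_
    intro i h1 h2
    simp [List.get_ofFn, Fin.cast]
  refine Finite.of_injective
    (fun v : Level d n => fun i : Fin n => v.1.get (Fin.cast v.2.symm i)) ?_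
  intro v w h
  have h' : (fun i : Fin n => v.1.get (Fin.cast v.2.symm i)) =
      (fun i : Fin n => w.1.get (Fin.cast w.2.symm i)) := h
  refine Subtype.ext ?_
  rw [key v, key w, h']

/-- The action of a tree automorphism on the `n`-th level of the tree. -/
def levelHom (d n : ℕ) : TreeAut d →* Equiv.Perm (Level d n) where
  toFun g :=
    { toFun := fun v => ⟨(g : Equiv.Perm (List (Fin d))) v.1, by rw [g.2.1, v.2]⟩
      invFun := fun v => ⟨((g⁻¹ : TreeAut d) : Equiv.Perm (List (Fin d))) v.1,
        by rw [(g⁻¹ : TreeAut d).2.1, v.2]⟩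
      left_inv := fun v => Subtype.ext (by simp)
      right_inv := fun v => Subtype.ext (by simp) }
  map_one' := by ext v; rfl
  map_mul' g h := by ext v; rfl

/-- The fraction of elements of `G_n` (the image of `G` acting on level `n`)
having at least one fixed point on level `n`. -/
noncomputable def fixedRatio {d : ℕ} (G : Subgroup (TreeAut d)) (n : ℕ) : ℝ :=
  (Nat.card {p : Equiv.Perm (Level d n) // p ∈ G.map (levelHom d n) ∧ ∃ v, p v = v} : ℝ) /
    (Nat.card (G.map (levelHom d n)) : ℝ)

/-- `G ≤ Aut(X*)` is contracting: there is a finite subset `N ⊆ G` such that every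
`g ∈ G` has all its restrictions at sufficiently long words inside `N`. -/
def Contracting {d : ℕ} (G : Subgroup (TreeAut d)) : Prop :=
  ∃ N : Set (TreeAut d), N.Finite ∧ N ⊆ (G : Set (TreeAut d)) ∧
    ∀ g ∈ G, ∃ m : ℕ, 1 ≤ m ∧ ∀ v : List (Fin d), m ≤ v.length → TreeAut.restrict g v ∈ N

/-- The set `N₁` of elements of `G` fixing a non-empty word `v` with `g|_v = g`. -/
def N1 {d : ℕ} (G : Subgroup (TreeAut d)) : Set (TreeAut d) :=
  {g | g ∈ G ∧ ∃ v : List (Fin d), v ≠ [] ∧ TreeAut.restrict g v = g ∧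
    (g : Equiv.Perm (List (Fin d))) v = v}

namespace TreeAut

theorem restrictPerm_apply {d : ℕ} (g : TreeAut d) (v w : List (Fin d)) :
    restrictPerm g v w = ((g : Equiv.Perm (List (Fin d))) (v ++ w)).drop v.length := rfl

theorem restrict_mul {d : ℕ} (g h : TreeAut d) (v : List (Fin d)) :
    restrict (g * h) v =
      restrict g ((h : Equiv.Perm (List (Fin d))) v) * restrict h v := by
  apply Subtype.ext
  apply Equiv.ext
  intro w
  show restrictPerm (g * h) v w
      = restrictPerm g ((h : Equiv.Perm (List (Fin d))) v) (restrictPerm h v w)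
  rw [restrictPerm_apply, restrictPerm_apply, restrictPerm_apply]
  have hmul : ((g * h : TreeAut d) : Equiv.Perm (List (Fin d))) (v ++ w)
      = (g : Equiv.Perm (List (Fin d))) ((h : Equiv.Perm (List (Fin d))) (v ++ w)) := rfl
  conv_lhs => rw [hmul, h.apply_append v w]
  rw [h.length_apply v]

theorem restrict_restrict {d : ℕ} (g : TreeAut d) (v w : List (Fin d)) :
    restrict (restrict g v) w = restrict g (v ++ w) := by
  apply Subtype.ext
  apply Equiv.ext
  intro u
  show restrictPerm (restrict g v) w u = restrictPerm g (v ++ w) u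
  rw [restrictPerm_apply, restrictPerm_apply]
  show (restrictPerm g v (w ++ u)).drop w.length = _
  rw [restrictPerm_apply, List.drop_drop, List.length_append, List.append_assoc,
    Nat.add_comm]

theorem restrict_pow {d : ℕ} (g : TreeAut d) (v : List (Fin d))
    (hfix : (g : Equiv.Perm (List (Fin d))) v = v)
    (hres : restrict g v = g) (n : ℕ) :
    ((g ^ n : TreeAut d) : Equiv.Perm (List (Fin d))) v = v ∧
      restrict (g ^ n) v = g ^ n := by
  induction n with
  | zero =>
    constructor
    · simp
    · apply Subtype.ext; apply Equiv.ext; intro w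
      show restrictPerm (1 : TreeAut d) v w = w
      rw [restrictPerm_apply]
      show (v ++ w).drop v.length = w
      simp
  | succ n ih =>
    have h1 : ((g ^ (n+1) : TreeAut d) : Equiv.Perm (List (Fin d))) v = v := by
      rw [pow_succ]
      show ((g ^ n : TreeAut d) : Equiv.Perm (List (Fin d)))
        ((g : Equiv.Perm (List (Fin d))) v) = v
      rw [hfix, ih.1]
    refine ⟨h1, ?_⟩
    rw [pow_succ, restrict_mul, hfix, hres, ih.2]

theorem restrict_pow_repeat {d : ℕ} (g : TreeAut d) (v : List (Fin d))
    (hfix : (g : Equiv.Perm (List (Fin d))) v = v)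
    (hres : restrict g v = g) (n k : ℕ) :
    restrict (g ^ n) (List.flatten (List.replicate k v)) = g ^ n := by
  induction k with
  | zero =>
    apply Subtype.ext; apply Equiv.ext; intro w
    show restrictPerm (g ^ n) [] w = _
    rw [restrictPerm_apply]
    simp
  | succ k ih =>
    rw [List.replicate_succ, List.flatten_cons, ← restrict_restrict,
      (restrict_pow g v hfix hres n).2, ih]

end TreeAut

/-- If `G ≤ Aut(X*)` is contracting, then every element of `N₁` (i.e. every `g ∈ G`
with `g|_v = g` and `g(v) = v` for some non-empty word `v`) has finite order. -/
theorem N1_isOfFinOrder {d : ℕ} (hd : 2 ≤ d) (G : Subgroup (TreeAut d))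
    (hcon : Contracting G) :
    ∀ g ∈ N1 G, IsOfFinOrder g := by
  rintro g ⟨hgG, v, hv, hres, hfix⟩
  obtain ⟨N, hNfin, -, hN⟩ := hcon
  -- every power of g lies in N
  have hpow : ∀ n : ℕ, (g ^ n : TreeAut d) ∈ N := by
    intro n
    obtain ⟨m, hm1, hm⟩ := hN (g ^ n) (pow_mem hgG n)
    have hlen : m ≤ (List.flatten (List.replicate m v)).length := by
      have : 1 ≤ v.length := List.length_pos_iff.mpr hv
      calc m = m * 1 := (mul_one m).symm
        _ ≤ m * v.length := Nat.mul_le_mul_left m this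
        _ = (List.flatten (List.replicate m v)).length := by
            rw [List.length_flatten]
            simp [List.map_replicate, List.sum_replicate, smul_eq_mul]
    have := hm _ hlen
    rwa [TreeAut.restrict_pow_repeat g v hfix hres n m] at this
  by_contra hinf
  have hinj : Function.Injective (fun n : ℕ => g ^ n) :=
    fun a b hab => injective_pow_iff_not_isOfFinOrder.mpr hinf hab
  have : (Set.range fun n : ℕ => g ^ n).Infinite := Set.infinite_range_of_injective hinj
  exact this (hNfin.subset (by rintro _ ⟨n, rfl⟩; exact hpow n))
end

section
/- Let A be a kneading automaton over X, and let a, b ∈ A be distinct states such that the automorphisms g_a and g_b of X* are both finitary. Then at least one of g_a, g_b fixes infinitely many ends of X*. -/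
/-- The cycle graph of a multi-set (indexed family) of permutations of `X`: a bipartite
graph whose white vertices are the points of `X` and whose black vertices are the cycles
of length at least 2 of the permutations (counted with multiplicity over the index set),
a white vertex being joined to a cycle exactly when the cycle moves it. -/
def cycleGraph {I X : Type*} [Fintype X] [DecidableEq X] (π : I → Equiv.Perm X) :
    SimpleGraph (X ⊕ {p : I × Equiv.Perm X // p.2 ∈ (π p.1).cycleFactorsFinset}) where
  Adj a b := ∃ (x : X) (c : {p : I × Equiv.Perm X // p.2 ∈ (π p.1).cycleFactorsFinset}),
    c.1.2 x ≠ x ∧ ((a = Sum.inl x ∧ b = Sum.inr c) ∨ (a = Sum.inr c ∧ b = Sum.inl x))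
  symm := ⟨by
    rintro a b ⟨x, c, hc, (⟨rfl, rfl⟩ | ⟨rfl, rfl⟩)⟩
    · exact ⟨x, c, hc, Or.inr ⟨rfl, rfl⟩⟩
    · exact ⟨x, c, hc, Or.inl ⟨rfl, rfl⟩⟩⟩
  loopless := ⟨by
    rintro a ⟨x, c, hc, (⟨rfl, h⟩ | ⟨rfl, h⟩)⟩ <;> simp at h⟩

/-- A multi-set (indexed family) of permutations of `X` is tree-like if its cycle graph
is a tree. -/
def TreeLikeFamily {I X : Type*} [Fintype X] [DecidableEq X] (π : I → Equiv.Perm X) :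
    Prop :=
  (cycleGraph π).IsTree

/-- The number of fixed points of a permutation of a finite set. -/
def fixCard {X : Type*} [Fintype X] [DecidableEq X] (σ : Equiv.Perm X) : ℕ :=
  (Finset.univ.filter fun x => σ x = x).card

namespace TreeAutomaton

variable {d : ℕ} {S : Type*}

/-- The action of the state `a` of the automaton `(π, t)` on words: reading letter `x`
in state `a` outputs `π a x` and moves to state `t a x`. -/
def act (π : S → Equiv.Perm (Fin d)) (t : S → Fin d → S) : S → List (Fin d) → List (Fin d)
  | _, [] => []
  | a, x :: w => π a x :: act π t (t a x) w

/-- The action of the state `a` of the inverse automaton. -/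
def actInv (π : S → Equiv.Perm (Fin d)) (t : S → Fin d → S) : S → List (Fin d) → List (Fin d)
  | _, [] => []
  | a, x :: w => (π a).symm x :: actInv π t (t a ((π a).symm x)) w

theorem actInv_act (π : S → Equiv.Perm (Fin d)) (t : S → Fin d → S) :
    ∀ (w : List (Fin d)) (a : S), actInv π t a (act π t a w) = w
  | [], _ => rfl
  | x :: w, a => by
    simp only [act, actInv, Equiv.symm_apply_apply]
    rw [actInv_act π t w (t a x)]

theorem act_actInv (π : S → Equiv.Perm (Fin d)) (t : S → Fin d → S) :
    ∀ (w : List (Fin d)) (a : S), act π t a (actInv π t a w) = w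
  | [], _ => rfl
  | x :: w, a => by
    simp only [act, actInv, Equiv.apply_symm_apply]
    rw [act_actInv π t w (t a ((π a).symm x))]

theorem length_act (π : S → Equiv.Perm (Fin d)) (t : S → Fin d → S) :
    ∀ (w : List (Fin d)) (a : S), (act π t a w).length = w.length
  | [], _ => rfl
  | x :: w, a => by simp only [act, List.length_cons, length_act π t w (t a x)]

/-- The state of the automaton after reading the word `v` starting in state `a`. -/
def stateAfter (t : S → Fin d → S) : S → List (Fin d) → S
  | a, [] => a
  | a, x :: w => stateAfter t (t a x) w

/-- The state of the inverse automaton after reading the word `v` starting in state `a`. -/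
def invStateAfter (π : S → Equiv.Perm (Fin d)) (t : S → Fin d → S) : S → List (Fin d) → S
  | a, [] => a
  | a, x :: w => invStateAfter π t (t a ((π a).symm x)) w

theorem act_append (π : S → Equiv.Perm (Fin d)) (t : S → Fin d → S) :
    ∀ (v w : List (Fin d)) (a : S),
      act π t a (v ++ w) = act π t a v ++ act π t (stateAfter t a v) w
  | [], _, _ => rfl
  | x :: v, w, a => by
    simp only [List.cons_append, act, stateAfter, List.append_eq, act_append π t v w (t a x)]

theorem actInv_append (π : S → Equiv.Perm (Fin d)) (t : S → Fin d → S) :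
    ∀ (v w : List (Fin d)) (a : S),
      actInv π t a (v ++ w) = actInv π t a v ++ actInv π t (invStateAfter π t a v) w
  | [], _, _ => rfl
  | x :: v, w, a => by
    simp only [List.cons_append, actInv, invStateAfter, List.append_eq,
      actInv_append π t v w (t a ((π a).symm x))]

theorem act_prefix_iff (π : S → Equiv.Perm (Fin d)) (t : S → Fin d → S)
    (a : S) (v w : List (Fin d)) : v <+: w ↔ act π t a v <+: act π t a w := by
  constructor
  · rintro ⟨u, rfl⟩
    rw [act_append]
    exact ⟨_, rfl⟩
  · rintro ⟨u, hu⟩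
    have hw : w = actInv π t a (act π t a v ++ u) := by rw [hu, actInv_act]
    rw [actInv_append, actInv_act] at hw
    exact ⟨_, hw.symm⟩

/-- The tree automorphism defined by the state `a` of the invertible automaton `(π, t)`. -/
def state (π : S → Equiv.Perm (Fin d)) (t : S → Fin d → S) (a : S) : TreeAut d :=
  ⟨{ toFun := act π t a
     invFun := actInv π t a
     left_inv := fun w => actInv_act π t w a
     right_inv := fun w => act_actInv π t w a },
   ⟨fun v => length_act π t v a, fun v w => act_prefix_iff π t a v w⟩⟩

/-- A kneading automaton: a finite invertible automaton such that (1) every state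
defining a non-trivial automorphism has exactly one incoming arrow, (2) in each cycle of
the action of a state on `X` at most one letter has a non-trivial restriction, and
(3) the multi-set of permutations of `X` defined by the states is tree-like. -/
structure IsKneading (π : S → Equiv.Perm (Fin d)) (t : S → Fin d → S) : Prop where
  finite_states : Finite S
  unique_arrow : ∀ a : S, state π t a ≠ 1 → ∃! p : S × Fin d, t p.1 p.2 = a
  cycle_cond : ∀ (a : S) (x y : Fin d), (π a).SameCycle x y →
    state π t (t a x) ≠ 1 → state π t (t a y) ≠ 1 → x = y
  treelike : TreeLikeFamily π

/-- Condition (4) of Nekrashevych's characterization of iterated monodromy groups of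
post-critically finite polynomials. -/
def Cond4 (π : S → Equiv.Perm (Fin d)) (t : S → Fin d → S) : Prop :=
  ¬ ∃ (a₁ a₂ : S) (v₁ v₂ : List (Fin d)) (h : TreeAut d),
      a₁ ≠ a₂ ∧ state π t a₁ ≠ 1 ∧ state π t a₂ ≠ 1 ∧
      v₁ ≠ [] ∧ v₂ ≠ [] ∧
      TreeAut.restrict (state π t a₁) v₁ = state π t a₁ ∧
      (state π t a₁ : Equiv.Perm (List (Fin d))) v₁ = v₁ ∧
      TreeAut.restrict (state π t a₂) v₂ = state π t a₂ ∧
      (state π t a₂ : Equiv.Perm (List (Fin d))) v₂ = v₂ ∧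
      h ∈ Subgroup.closure (Set.range (state π t)) ∧
      (h : Equiv.Perm (List (Fin d))) v₁ = v₂ ∧ TreeAut.restrict h v₁ = h

/-- The state `a` lies in a cycle of the reduced Moore diagram of the automaton: reading
some non-empty word `v` from `a` returns to `a`, all the states traversed along the way
being non-trivial. -/
def InCycle (π : S → Equiv.Perm (Fin d)) (t : S → Fin d → S) (a : S) : Prop :=
  ∃ v : List (Fin d), v ≠ [] ∧ stateAfter t a v = a ∧
    ∀ u : List (Fin d), u <+: v → state π t (stateAfter t a u) ≠ 1

/-- A tree automorphism is finitary if its restrictions at all sufficiently long words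
are trivial. -/
def _root_.TreeAut.Finitary {d : ℕ} (g : TreeAut d) : Prop :=
  ∃ n : ℕ, ∀ v : List (Fin d), n ≤ v.length → TreeAut.restrict g v = 1

end TreeAutomaton


open Finset in
/-- words of length n over Fin d -/
def myWords (d : ℕ) : ℕ → Finset (List (Fin d))
  | 0 => {[]}
  | n+1 => Finset.univ.biUnion fun x : Fin d => (myWords d n).image (List.cons x)

theorem mem_myWords {d : ℕ} : ∀ {n : ℕ} {v : List (Fin d)}, v ∈ myWords d n ↔ v.length = n
  | 0, v => by
    constructor
    · intro h; simp [myWords] at h; simp [h]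
    · intro h; rw [List.length_eq_zero_iff] at h; simp [myWords, h]
  | n+1, v => by
    simp only [myWords, Finset.mem_biUnion, Finset.mem_image, Finset.mem_univ, true_and]
    constructor
    · rintro ⟨x, w, hw, rfl⟩
      simp [mem_myWords.mp hw]
    · intro h
      cases v with
      | nil => simp at h
      | cons x w =>
        exact ⟨x, w, mem_myWords.mpr (by simpa using h), rfl⟩

theorem card_myWords {d : ℕ} : ∀ n : ℕ, (myWords d n).card = d ^ n
  | 0 => by simp [myWords]
  | n+1 => by
    rw [myWords, Finset.card_biUnion, pow_succ]
    · have : ∀ x : Fin d, ((myWords d n).image (List.cons x)).card = d ^ n := by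
        intro x
        rw [Finset.card_image_of_injective _ (fun a b h => by injection h), card_myWords n]
      simp [this, mul_comm]
    · intro x _ y _ hxy
      simp only [Finset.disjoint_left, Finset.mem_image]
      rintro v ⟨w, _, rfl⟩ ⟨w', _, h⟩
      injection h with h1 h2
      exact hxy h1.symm

theorem fixesEnd_set_infinite {d : ℕ} (hd : 2 ≤ d) (g : TreeAut d) {n : ℕ}
    (hfin : ∀ v : List (Fin d), n ≤ v.length → TreeAut.restrict g v = 1)
    {v : List (Fin d)} (hv : v.length = n)
    (hgv : (g : Equiv.Perm (List (Fin d))) v = v) :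
    {w : ℕ → Fin d | TreeAut.FixesEnd g w}.Infinite := by
  classical
  set G : Equiv.Perm (List (Fin d)) := (g : Equiv.Perm (List (Fin d))) with hG
  set x0 : Fin d := ⟨0, by omega⟩
  set x1 : Fin d := ⟨1, by omega⟩
  set e : ℕ → ℕ → Fin d := fun k i =>
    if h : i < n then v.get ⟨i, by omega⟩ else (if i = n + k then x1 else x0) with he
  have happ : ∀ w : List (Fin d), G (v ++ w) = v ++ w := by
    intro w
    have h1 : TreeAut.restrict g v = 1 := hfin v (by omega)
    have h2 : (G (v ++ w)).drop v.length = w := by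
      have : (G (v ++ w)).drop v.length = ((TreeAut.restrict g v : TreeAut d) :
          Equiv.Perm (List (Fin d))) w := rfl
      rw [this, h1]; rfl
    have h3 := g.apply_append v w
    rw [← hG] at h3
    rw [h3, h2, hgv]
  have hmem : ∀ k : ℕ, TreeAut.FixesEnd g (e k) := by
    intro k m
    by_cases hm : m ≤ n
    · have hL : (List.range m).map (e k) = v.take m := by
        refine List.ext_getElem (by simp; omega) ?_
        intro i h1 h2
        simp only [List.getElem_map, List.getElem_range, List.getElem_take]
        simp only [List.length_map, List.length_range] at h1
        rw [he]
        simp only []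
        rw [dif_pos (by omega)]
        simp [List.get_eq_getElem]
      have hpre : v.take m <+: v := List.take_prefix m v
      have h4 : G (v.take m) <+: v := by
        have := (g.prefix_iff (v.take m) v).mp hpre
        rwa [hgv] at this
      have h5 : G (v.take m) = v.take m := by
        have hlen : (G (v.take m)).length = m := by
          rw [g.length_apply, List.length_take]; omega
        rw [List.prefix_iff_eq_take] at h4
        rw [h4, hlen]
      rw [hL, h5]
    · push_neg at hm
      set T : List (Fin d) := (List.range (m - n)).map (fun j => e k (n + j)) with hT
      have hL : (List.range m).map (e k) = v ++ T := by
        refine List.ext_getElem (by simp [hT]; omega) ?_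
        intro i h1 h2
        simp only [List.length_map, List.length_range] at h1
        simp only [List.getElem_map, List.getElem_range]
        by_cases hi : i < n
        · rw [List.getElem_append_left (by omega)]
          rw [he]; simp only []
          rw [dif_pos hi]
          simp [List.get_eq_getElem]
        · rw [List.getElem_append_right (by omega)]
          simp only [hT, List.getElem_map, List.getElem_range, hv]
          congr 1
          omega
      rw [hL, happ]
  have hinj : Function.Injective e := by
    intro k k' hkk'
    by_contra hne
    have h1 : e k (n + k) = x1 := by
      rw [he]; simp only []
      rw [dif_neg (by omega)]; simp
    have h2 : e k' (n + k) = x0 := by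
      rw [he]; simp only []
      rw [dif_neg (by omega)]; simp [hne]
    rw [hkk'] at h1
    rw [h1] at h2
    exact absurd (congrArg Fin.val h2) (by simp [x0, x1])
  exact Set.infinite_of_injective_forall_mem hinj hmem

section Counting
open TreeAutomaton

variable {d : ℕ} {S : Type*}

/-- Number of words of length `n` moved by state `s`. -/
def movedCount (π : S → Equiv.Perm (Fin d)) (t : S → Fin d → S) (s : S) (n : ℕ) : ℕ :=
  ((myWords d n).filter fun v => act π t s v ≠ v).card

theorem state_ne_one_of_moved {π : S → Equiv.Perm (Fin d)} {t : S → Fin d → S} {s : S}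
    {w : List (Fin d)} (h : act π t s w ≠ w) : state π t s ≠ 1 := by
  intro h1
  apply h
  have h2 : (state π t s : Equiv.Perm (List (Fin d))) = 1 := by rw [h1]; rfl
  have h3 : act π t s w = (state π t s : Equiv.Perm (List (Fin d))) w := rfl
  rw [h3, h2, Equiv.Perm.one_apply]

theorem movedCount_zero (π : S → Equiv.Perm (Fin d)) (t : S → Fin d → S) (s : S) :
    movedCount π t s 0 = 0 := by
  rw [movedCount, myWords]
  rw [Finset.filter_eq_empty_iff.mpr, Finset.card_empty]
  intro v hv
  rw [Finset.mem_singleton] at hv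
  subst hv
  simp [act]

theorem movedCount_eq_pow {π : S → Equiv.Perm (Fin d)} {t : S → Fin d → S} {s : S} {n : ℕ}
    (h : ∀ v : List (Fin d), v.length = n → act π t s v ≠ v) :
    movedCount π t s n = d ^ n := by
  rw [movedCount, Finset.filter_true_of_mem, card_myWords]
  intro v hv
  exact h v (mem_myWords.mp hv)

theorem movedCount_succ_le (π : S → Equiv.Perm (Fin d)) (t : S → Fin d → S) (s : S) (n : ℕ) :
    movedCount π t s (n+1) ≤
      ∑ x : Fin d, (if π s x = x then movedCount π t (t s x) n else d ^ n) := by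
  classical
  rw [movedCount, myWords, Finset.filter_biUnion]
  refine le_trans Finset.card_biUnion_le (Finset.sum_le_sum ?_)
  intro x _
  rw [Finset.filter_image]
  rw [Finset.card_image_of_injective _ (fun a b h => by injection h)]
  by_cases hx : π s x = x
  · rw [if_pos hx]
    refine le_of_eq (congrArg Finset.card ?_)
    apply Finset.filter_congr
    intro w _
    show (¬ act π t s (x :: w) = x :: w) ↔ ¬ act π t (t s x) w = w
    rw [show act π t s (x :: w) = π s x :: act π t (t s x) w from rfl, hx]
    simp
  · rw [if_neg hx]
    calc ((myWords d n).filter _).card ≤ (myWords d n).card := Finset.card_filter_le _ _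
      _ = d ^ n := card_myWords n


theorem sum_fixed_trans_le [Fintype S] {π : S → Equiv.Perm (Fin d)} {t : S → Fin d → S}
    (hk : IsKneading π t) (n : ℕ) :
    ∑ s : S, ∑ x ∈ Finset.univ.filter (fun x => π s x = x), movedCount π t (t s x) n
      ≤ ∑ c : S, movedCount π t c n := by
  classical
  set A : Finset (S × Fin d) :=
    (Finset.univ : Finset (S × Fin d)).filter (fun p => π p.1 p.2 = p.2) with hA
  have h1 : ∑ p ∈ A, movedCount π t (t p.1 p.2) n
      = ∑ s : S, ∑ x ∈ Finset.univ.filter (fun x => π s x = x), movedCount π t (t s x) n := by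
    refine Finset.sum_finset_product A Finset.univ
      (fun s => Finset.univ.filter (fun x => π s x = x)) ?_
    intro p
    simp [hA]
  rw [← h1]
  set B : Finset (S × Fin d) := A.filter (fun p => 0 < movedCount π t (t p.1 p.2) n) with hB
  have h2 : ∑ p ∈ A, movedCount π t (t p.1 p.2) n = ∑ p ∈ B, movedCount π t (t p.1 p.2) n := by
    refine (Finset.sum_subset (Finset.filter_subset _ _) ?_).symm
    intro p hp hq
    simp only [hB, Finset.mem_filter, not_and, not_lt] at hq
    exact Nat.le_zero.mp (hq hp)
  rw [h2]
  have hinj : Set.InjOn (fun p : S × Fin d => t p.1 p.2) B := by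
    intro p hp q hq hpq
    have hne : ∀ r : S × Fin d, r ∈ B → state π t (t r.1 r.2) ≠ 1 := by
      intro r hr
      rw [hB, Finset.mem_filter] at hr
      obtain ⟨w, hw⟩ := Finset.card_pos.mp hr.2
      rw [Finset.mem_filter] at hw
      exact state_ne_one_of_moved hw.2
    obtain ⟨u, -, hu⟩ := hk.unique_arrow (t p.1 p.2) (hne p hp)
    have := (hu p rfl).trans (hu q hpq.symm).symm
    exact this
  calc ∑ p ∈ B, movedCount π t (t p.1 p.2) n
      = ∑ c ∈ B.image (fun p : S × Fin d => t p.1 p.2), movedCount π t c n :=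
        (Finset.sum_image (f := fun c => movedCount π t c n) (fun p hp q hq h => hinj hp hq h)).symm
    _ ≤ ∑ c : S, movedCount π t c n :=
        Finset.sum_le_sum_of_subset (Finset.subset_univ _)

theorem sum_movedCount_le [Fintype S] {π : S → Equiv.Perm (Fin d)} {t : S → Fin d → S}
    (hk : IsKneading π t) :
    ∀ n : ℕ, ∑ s : S, movedCount π t s n ≤
      (∑ s : S, (π s).support.card) * ∑ i ∈ Finset.range n, d ^ i := by
  classical
  intro n
  induction n with
  | zero => simp [movedCount_zero]
  | succ n ih =>
    have step : ∑ s : S, movedCount π t s (n+1) ≤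
        (∑ s : S, (π s).support.card) * d ^ n + ∑ c : S, movedCount π t c n := by
      calc ∑ s : S, movedCount π t s (n+1)
          ≤ ∑ s : S, ∑ x : Fin d, (if π s x = x then movedCount π t (t s x) n else d ^ n) :=
            Finset.sum_le_sum fun s _ => movedCount_succ_le π t s n
        _ = ∑ s : S, ((∑ x ∈ Finset.univ.filter (fun x => π s x = x), movedCount π t (t s x) n)
              + (Finset.univ.filter (fun x => ¬ π s x = x)).card * d ^ n) := by
            refine Finset.sum_congr rfl fun s _ => ?_
            rw [Finset.sum_ite, Finset.sum_const, smul_eq_mul]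
        _ = (∑ s : S, ∑ x ∈ Finset.univ.filter (fun x => π s x = x), movedCount π t (t s x) n)
              + (∑ s : S, (π s).support.card) * d ^ n := by
            have hsupp : ∀ s : S, (Finset.univ.filter (fun x => ¬ π s x = x)).card
                = (π s).support.card := by
              intro s
              congr 1
            rw [Finset.sum_add_distrib, ← Finset.sum_mul]
            simp_rw [hsupp]
        _ ≤ (∑ c : S, movedCount π t c n) + (∑ s : S, (π s).support.card) * d ^ n := by
            exact Nat.add_le_add_right (sum_fixed_trans_le hk n) _
        _ = (∑ s : S, (π s).support.card) * d ^ n + ∑ c : S, movedCount π t c n := by ring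
    calc ∑ s : S, movedCount π t s (n+1)
        ≤ (∑ s : S, (π s).support.card) * d ^ n + ∑ c : S, movedCount π t c n := step
      _ ≤ (∑ s : S, (π s).support.card) * d ^ n
            + (∑ s : S, (π s).support.card) * ∑ i ∈ Finset.range n, d ^ i := by gcongr
      _ = (∑ s : S, (π s).support.card) * ∑ i ∈ Finset.range (n+1), d ^ i := by
          rw [Finset.sum_range_succ]; ring

end Counting

section TreeBound

variable {S : Type*} [Fintype S] {d : ℕ}

theorem sum_factors_support_card (f : Equiv.Perm (Fin d)) :
    ∑ σ ∈ f.cycleFactorsFinset, σ.support.card = f.support.card := by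
  rw [← Equiv.Perm.sum_cycleType, Equiv.Perm.cycleType_def]
  rfl

/-- The equivalence between cycles (with their source states) and the sigma type. -/
def cycEquiv (π : S → Equiv.Perm (Fin d)) :
    {p : S × Equiv.Perm (Fin d) // p.2 ∈ (π p.1).cycleFactorsFinset} ≃
      Σ s : S, {σ : Equiv.Perm (Fin d) // σ ∈ (π s).cycleFactorsFinset} where
  toFun c := ⟨c.1.1, ⟨c.1.2, c.2⟩⟩
  invFun x := ⟨(x.1, x.2.1), x.2.2⟩
  left_inv c := rfl
  right_inv x := rfl

/-- Each pair (letter, cycle) with the cycle moving the letter gives an edge. -/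
def edgeOf (π : S → Equiv.Perm (Fin d))
    (q : {q : (Fin d) × {p : S × Equiv.Perm (Fin d) // p.2 ∈ (π p.1).cycleFactorsFinset} //
      q.2.1.2 q.1 ≠ q.1}) : (cycleGraph π).edgeSet :=
  ⟨s(Sum.inl q.1.1, Sum.inr q.1.2),
    SimpleGraph.mem_edgeSet _ |>.mpr ⟨q.1.1, q.1.2, q.2, Or.inl ⟨rfl, rfl⟩⟩⟩

theorem edgeOf_val (π : S → Equiv.Perm (Fin d)) (q) :
    (edgeOf π q).1 = s(Sum.inl q.1.1, Sum.inr q.1.2) := rfl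

theorem treelike_support_bound (π : S → Equiv.Perm (Fin d)) (h : TreeLikeFamily π) :
    (∑ s : S, (π s).support.card) + 2 ≤ 2 * d := by
  classical
  set C := {p : S × Equiv.Perm (Fin d) // p.2 ∈ (π p.1).cycleFactorsFinset} with hC
  -- the number of edges equals the total support
  have hedge : Nat.card (cycleGraph π).edgeSet = ∑ s : S, (π s).support.card := by
    set Q := {q : (Fin d) × C // q.2.1.2 q.1 ≠ q.1} with hQ
    have hfinj : Function.Injective (edgeOf π) := by
      rintro ⟨⟨x, c⟩, hx⟩ ⟨⟨x', c'⟩, hx'⟩ hf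
      have h1 : s(Sum.inl x, Sum.inr c) = (s(Sum.inl x', Sum.inr c') :
          Sym2 (Fin d ⊕ C)) := by
        have := congrArg Subtype.val hf
        rwa [edgeOf_val, edgeOf_val] at this
      rw [Sym2.eq_iff] at h1
      rcases h1 with ⟨h2, h3⟩ | ⟨h2, h3⟩
      · exact Subtype.ext (Prod.ext (Sum.inl.inj h2) (Sum.inr.inj h3))
      · exact absurd h2 (by simp)
    have hfsurj : Function.Surjective (edgeOf π) := by
      rintro ⟨e, he⟩
      induction e using Sym2.ind with
      | _ u w =>
        rw [SimpleGraph.mem_edgeSet] at he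
        obtain ⟨x, c, hc, hcase⟩ := he
        rcases hcase with ⟨h1, h2⟩ | ⟨h1, h2⟩ <;> subst h1 <;> subst h2
        · exact ⟨⟨(x, c), hc⟩, Subtype.ext rfl⟩
        · exact ⟨⟨(x, c), hc⟩, Subtype.ext (by rw [edgeOf_val]; exact Sym2.eq_swap)⟩
    have e1 : Q ≃ (cycleGraph π).edgeSet := Equiv.ofBijective (edgeOf π) ⟨hfinj, hfsurj⟩
    have e2 : Q ≃ Σ c : C, {x : Fin d // c.1.2 x ≠ x} :=
      { toFun := fun q => ⟨q.1.2, ⟨q.1.1, q.2⟩⟩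
        invFun := fun x => ⟨(x.2.1, x.1), x.2.2⟩
        left_inv := fun q => rfl
        right_inv := fun x => rfl }
    rw [← Nat.card_congr e1, Nat.card_congr e2, Nat.card_eq_fintype_card, Fintype.card_sigma]
    have hsub : ∀ c : C, Fintype.card {x : Fin d // c.1.2 x ≠ x} = (c.1.2).support.card := by
      intro c
      rw [Fintype.card_subtype]
      congr 1
    simp_rw [hsub]
    -- now sum over C of support cards
    rw [← Equiv.sum_comp (cycEquiv π).symm (fun c : C => (c.1.2).support.card)]
    have : ∀ x : Σ s : S, {σ : Equiv.Perm (Fin d) // σ ∈ (π s).cycleFactorsFinset},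
        (((cycEquiv π).symm x).1.2).support.card = x.2.1.support.card := fun x => rfl
    simp_rw [this]
    rw [← Finset.univ_sigma_univ, Finset.sum_sigma]
    refine Finset.sum_congr rfl fun s _ => ?_
    rw [← sum_factors_support_card (π s),
      ← Finset.sum_coe_sort ((π s).cycleFactorsFinset) (fun σ => σ.support.card)]
  haveI : Fintype (cycleGraph π).edgeSet := Fintype.ofFinite _
  have htree : (cycleGraph π).IsTree := h
  have h1 := htree.card_edgeFinset
  rw [SimpleGraph.edgeFinset_card] at h1
  have h2 : Fintype.card (Fin d ⊕ C) = d + Fintype.card C := by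
    rw [Fintype.card_sum, Fintype.card_fin]
  have h3 : Nat.card (cycleGraph π).edgeSet = Fintype.card (cycleGraph π).edgeSet :=
    Nat.card_eq_fintype_card
  have hcyc : Fintype.card C = ∑ s : S, (π s).cycleFactorsFinset.card := by
    rw [Fintype.card_congr (cycEquiv π), Fintype.card_sigma]
    simp [Fintype.card_coe]
  have h2le : 2 * Fintype.card C ≤ ∑ s : S, (π s).support.card := by
    rw [hcyc, Finset.mul_sum]
    refine Finset.sum_le_sum fun s _ => ?_
    calc 2 * (π s).cycleFactorsFinset.card
        = ∑ _σ ∈ (π s).cycleFactorsFinset, 2 := by rw [Finset.sum_const]; ring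
      _ ≤ ∑ σ ∈ (π s).cycleFactorsFinset, σ.support.card :=
          Finset.sum_le_sum fun σ hσ =>
            (Equiv.Perm.mem_cycleFactorsFinset_iff.mp hσ).1.two_le_card_support
      _ = (π s).support.card := sum_factors_support_card (π s)
  rw [h2] at h1
  omega

end TreeBound

theorem geom_arith {d m : ℕ} (h : m + 2 ≤ 2 * d) :
    ∀ n : ℕ, m * (∑ i ∈ Finset.range n, d ^ i) + 2 ≤ 2 * d ^ n
  | 0 => by simp
  | n+1 => by
    have ih := geom_arith h n
    rw [Finset.sum_range_succ, pow_succ]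
    calc m * (∑ i ∈ Finset.range n, d ^ i + d ^ n) + 2
        = (m * ∑ i ∈ Finset.range n, d ^ i + 2) + m * d ^ n := by ring
      _ ≤ 2 * d ^ n + m * d ^ n := by omega
      _ = (m + 2) * d ^ n := by ring
      _ ≤ 2 * d * d ^ n := Nat.mul_le_mul_right _ h
      _ = 2 * (d ^ n * d) := by ring

open TreeAutomaton in
/-- If `a ≠ b` are states of a kneading automaton whose associated tree automorphisms are
both finitary, then at least one of them fixes infinitely many ends of `X*`. -/
theorem kneading_finitary_fixes_ends {d : ℕ} (hd : 2 ≤ d) {S : Type*}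
    (π : S → Equiv.Perm (Fin d)) (t : S → Fin d → S)
    (hk : IsKneading π t) (a b : S) (hab : a ≠ b)
    (ha : (state π t a).Finitary) (hb : (state π t b).Finitary) :
    {w : ℕ → Fin d | TreeAut.FixesEnd (state π t a) w}.Infinite ∨
      {w : ℕ → Fin d | TreeAut.FixesEnd (state π t b) w}.Infinite := by
    classical
  haveI : Finite S := hk.finite_states
  haveI : Fintype S := Fintype.ofFinite S
  obtain ⟨na, hna⟩ := ha
  obtain ⟨nb, hnb⟩ := hb
  set N := max na nb with hN
  suffices hsuf : (∃ v : List (Fin d), v.length = N ∧ act π t a v = v) ∨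
      (∃ v : List (Fin d), v.length = N ∧ act π t b v = v) by
    rcases hsuf with ⟨v, hv, hfix⟩ | ⟨v, hv, hfix⟩
    · left
      exact fixesEnd_set_infinite hd (state π t a)
        (fun w hw => hna w (by omega)) hv hfix
    · right
      exact fixesEnd_set_infinite hd (state π t b)
        (fun w hw => hnb w (by omega)) hv hfix
  by_contra hcon
  push_neg at hcon
  obtain ⟨h1, h2⟩ := hcon
  have hma : movedCount π t a N = d ^ N := movedCount_eq_pow (fun v hv => h1 v hv)
  have hmb : movedCount π t b N = d ^ N := movedCount_eq_pow (fun v hv => h2 v hv)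
  have hsum : 2 * d ^ N ≤ ∑ s : S, movedCount π t s N := by
    have hle := Finset.sum_le_sum_of_subset (f := fun s => movedCount π t s N)
      (Finset.subset_univ ({a, b} : Finset S))
    rw [Finset.sum_pair hab] at hle
    simp only [hma, hmb] at hle
    omega
  have hbound := sum_movedCount_le hk N
  have htb := treelike_support_bound π hk.treelike
  have harith := geom_arith htb N
  have hfinal : 2 * d ^ N + 2 ≤ 2 * d ^ N := by
    calc 2 * d ^ N + 2 ≤ (∑ s : S, movedCount π t s N) + 2 := by omega
      _ ≤ (∑ s : S, (π s).support.card) * (∑ i ∈ Finset.range N, d ^ i) + 2 := by omega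
      _ ≤ 2 * d ^ N := harith
  omega
end

section
/- Let #X = d ≥ 2 and suppose G ≤ Aut(X*) is generated by two distinct non-trivial elements a and b with a² = b² = 1 such that ab is spherically transitive. Then F(G) = r/4, where r is the number of elements of {a, b} that fix at least one end of X*. -/
open Equiv

/-- power congruence mod order -/
lemma zpow_eq_of_cast_eq {G : Type*} [Group G] (C : G) {m : ℕ} (hm : orderOf C = m)
    {z₁ z₂ : ℤ} (h : (z₁ : ZMod m) = z₂) : C ^ z₁ = C ^ z₂ := by
  have hd : (m : ℤ) ∣ z₁ - z₂ :=
    (ZMod.intCast_zmod_eq_zero_iff_dvd (z₁ - z₂) m).mp (by push_cast; rw [h]; ring)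
  obtain ⟨q, hq⟩ := hd
  have hz : z₁ = z₂ + m * q := by linarith
  rw [hz, zpow_add, zpow_mul, zpow_natCast, ← hm, pow_orderOf_eq_one, one_zpow, mul_one]

lemma cyclic_reg {α : Type*} [Finite α] (C : Perm α) (x₀ : α)
    (free : ∀ z : ℤ, (∃ x, (C ^ z) x = x) → C ^ z = 1)
    (htr : ∀ y, ∃ z : ℤ, (C ^ z) x₀ = y) :
    Function.Bijective (fun i : ZMod (orderOf C) => (C ^ (i.val : ℤ)) x₀) := by
  haveI : NeZero (orderOf C) := ⟨(orderOf_pos C).ne'⟩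
  constructor
  · intro i j h
    simp only at h
    have h2 : (C ^ ((i.val : ℤ) - (j.val : ℤ))) x₀ = x₀ := by
      have h' : (C ^ (-(j.val : ℤ)) * C ^ (i.val : ℤ)) x₀
          = (C ^ (-(j.val : ℤ)) * C ^ (j.val : ℤ)) x₀ := by
        simp only [Perm.mul_apply, h]
      rw [← zpow_add, ← zpow_add, neg_add_cancel, zpow_zero, Perm.one_apply] at h'
      rw [sub_eq_neg_add]
      exact h'
    have h3 := free _ ⟨x₀, h2⟩
    have h4 : ((orderOf C : ℤ)) ∣ (i.val : ℤ) - (j.val : ℤ) := orderOf_dvd_iff_zpow_eq_one.mpr h3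
    have h5 : ((((i.val : ℤ) - (j.val : ℤ)) : ℤ) : ZMod (orderOf C)) = 0 :=
      (ZMod.intCast_zmod_eq_zero_iff_dvd _ _).mpr h4
    have h6 : ((i.val : ZMod (orderOf C))) = (j.val : ZMod (orderOf C)) := by
      push_cast at h5
      linear_combination h5
    rwa [ZMod.natCast_rightInverse i, ZMod.natCast_rightInverse j] at h6
  · intro y
    obtain ⟨z, hz⟩ := htr y
    refine ⟨(z : ZMod (orderOf C)), ?_⟩
    simp only
    rw [zpow_eq_of_cast_eq C rfl (z₂ := z) (by push_cast [ZMod.natCast_rightInverse]; simp), hz]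

section Main
variable {α : Type*} [Finite α]

lemma dihedral_main (A B : Perm α) (hA : A * A = 1) (hB : B * B = 1)
    (hm3 : 3 ≤ Nat.card α)
    (htrans : ∀ x y : α, ∃ k : ℤ, ((A * B) ^ k) x = y) :
    (Nat.card {p : Perm α // p ∈ Subgroup.closure {A, B} ∧ ∃ x, p x = x}
      = 1 + (if Even (Nat.card α) then Nat.card α / 2 else Nat.card α)) ∧
    (Nat.card (Subgroup.closure {A, B} : Subgroup (Perm α)) = 2 * Nat.card α) ∧
    (Odd (Nat.card α) → (∃ x, A x = x) ∧ (∃ x, B x = x)) ∧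
    (Even (Nat.card α) → ((∃ x, A x = x) ↔ ¬ ∃ x, B x = x)) := by
  haveI : Nonempty α := (Nat.card_pos_iff.mp (by omega)).1
  obtain ⟨x₀⟩ := ‹Nonempty α›
  set C : Perm α := A * B with hC
  -- C-orbit freeness
  have free : ∀ z : ℤ, (∃ x, (C ^ z) x = x) → C ^ z = 1 := by
    rintro z ⟨x, hx⟩
    ext y
    obtain ⟨j, hj⟩ := htrans x y
    have hcomm : (C ^ z * C ^ j) x = (C ^ j * C ^ z) x := by
      rw [← zpow_add, ← zpow_add, add_comm]
    rw [Perm.one_apply, ← hj, ← Perm.mul_apply, hcomm, Perm.mul_apply, hx]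
  have htr : ∀ y, ∃ z : ℤ, (C ^ z) x₀ = y := fun y => htrans x₀ y
  have hbij := cyclic_reg C x₀ free htr
  have hcard : Nat.card α = orderOf C := by
    rw [← Nat.card_eq_of_bijective _ hbij, Nat.card_zmod]
  set m := orderOf C with hmdef
  rw [hcard] at hm3 ⊢
  haveI : NeZero m := ⟨by omega⟩
  set e : ZMod m → α := fun i => (C ^ (i.val : ℤ)) x₀ with he
  have hv : ∀ i : ZMod m, ((i.val : ℕ) : ZMod m) = i := fun i => ZMod.natCast_rightInverse i
  have zpc : ∀ {z₁ z₂ : ℤ}, ((z₁ : ZMod m) = z₂) → C ^ z₁ = C ^ z₂ :=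
    fun h => zpow_eq_of_cast_eq C rfl h
  -- action of C powers on e
  have hCe : ∀ (z : ℤ) (i : ZMod m), (C ^ z) (e i) = e (i + z) := by
    intro z i
    show (C ^ z) ((C ^ (i.val : ℤ)) x₀) = (C ^ (((i + z : ZMod m)).val : ℤ)) x₀
    rw [← Perm.mul_apply, ← zpow_add]
    congr 1
    refine zpc ?_
    push_cast [hv]
    ring
  have hA' : A⁻¹ = A := inv_eq_of_mul_eq_one_right hA
  have hB' : B⁻¹ = B := inv_eq_of_mul_eq_one_right hB
  have hconj : ∀ z : ℤ, A * C ^ z * A = C ^ (-z) := by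
    intro z
    have h1 : (MulAut.conj A) (C ^ z) = ((MulAut.conj A) C) ^ z := map_zpow _ _ _
    have h2 : (MulAut.conj A) C = C⁻¹ := by
      simp only [MulAut.conj_apply, hA', hC]
      rw [mul_inv_rev, hA', hB']
      calc A * (A * B) * A = (A * A) * (B * A) := by group
        _ = B * A := by rw [hA, one_mul]
    rw [h2] at h1
    have : A * C ^ z * A⁻¹ = C ^ (-z) := by
      simpa [MulAut.conj_apply, zpow_neg, inv_zpow] using h1
    rwa [hA'] at this
  have hAz : ∀ z : ℤ, A * C ^ z = C ^ (-z) * A := by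
    intro z
    have := hconj z
    calc A * C ^ z = (A * C ^ z * A) * A := by rw [mul_assoc, mul_assoc, hA, mul_one]
      _ = C ^ (-z) * A := by rw [this]
  -- the reflection parameter t
  obtain ⟨zt, hzt⟩ := htrans x₀ (A x₀)
  set t : ZMod m := (zt : ZMod m) with ht
  have hAe : ∀ i : ZMod m, A (e i) = e (t - i) := by
    intro i
    show A ((C ^ (i.val : ℤ)) x₀) = (C ^ (((t - i : ZMod m)).val : ℤ)) x₀
    rw [← Perm.mul_apply, hAz, Perm.mul_apply, ← hzt, ← Perm.mul_apply, ← zpow_add]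
    congr 1
    refine zpc ?_
    push_cast [hv]
    ring
  have hBC : B = A * C := by rw [hC, ← mul_assoc, hA, one_mul]
  have hBeq : B = C ^ (-1 : ℤ) * A := by
    rw [hBC]
    have := hAz 1
    simpa using this
  -- membership characterization
  set H := Subgroup.closure ({A, B} : Set (Perm α)) with hH
  have hAH : A ∈ H := Subgroup.subset_closure (by simp)
  have hBH : B ∈ H := Subgroup.subset_closure (by simp)
  have hCH : C ∈ H := by rw [hC]; exact mul_mem hAH hBH
  have hmem : ∀ p, p ∈ H → ∃ z : ℤ, p = C ^ z ∨ p = C ^ z * A := by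
    intro p hp
    induction hp using Subgroup.closure_induction with
    | mem x hx =>
      rcases hx with h | h
      · exact ⟨0, Or.inr (by simp [h])⟩
      · refine ⟨-1, Or.inr ?_⟩
        rw [h, hBeq]
    | one => exact ⟨0, Or.inl (by simp)⟩
    | mul x y hx hy ihx ihy =>
      obtain ⟨z₁, h₁⟩ := ihx
      obtain ⟨z₂, h₂⟩ := ihy
      rcases h₁ with h₁ | h₁ <;> rcases h₂ with h₂ | h₂
      · exact ⟨z₁ + z₂, Or.inl (by rw [h₁, h₂, zpow_add])⟩
      · exact ⟨z₁ + z₂, Or.inr (by rw [h₁, h₂, zpow_add, mul_assoc])⟩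
      · refine ⟨z₁ - z₂, Or.inr ?_⟩
        rw [h₁, h₂, mul_assoc, hAz z₂, ← mul_assoc, ← zpow_add]
        ring_nf
      · refine ⟨z₁ - z₂, Or.inl ?_⟩
        rw [h₁, h₂, mul_assoc, ← mul_assoc A (C ^ z₂), hAz z₂, mul_assoc, hA, mul_one,
          ← zpow_add]
        ring_nf
    | inv x hx ihx =>
      obtain ⟨z, h⟩ := ihx
      rcases h with h | h
      · exact ⟨-z, Or.inl (by rw [h, ← zpow_neg])⟩
      · refine ⟨z, Or.inr ?_⟩
        rw [h, mul_inv_rev, hA', ← zpow_neg, hAz (-z), neg_neg]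
  have horder : orderOf C = m := rfl
  have hCne : C⁻¹ ≠ C := by
    intro h
    have h2 : C ^ (2 : ℕ) = 1 := by
      rw [pow_two]
      nth_rewrite 1 [← h]
      rw [inv_mul_cancel]
    have := orderOf_dvd_of_pow_eq_one h2
    rw [horder] at this
    have := Nat.le_of_dvd (by norm_num) this
    omega
  have hAnC : ∀ z : ℤ, A ≠ C ^ z := by
    intro z h
    have hcomm : C * A = A * C := by
      rw [h]
      exact ((Commute.refl C).zpow_right z).eq
    have h1 : A * C = C⁻¹ * A := by
      have := hAz 1
      simpa using this
    have h2 : C⁻¹ * A = C * A := by rw [← h1, hcomm]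
    exact hCne (mul_right_cancel h2)
  have heinj := hbij.1
  have hesurj := hbij.2
  have zinj : ∀ z : ℤ, C ^ z = 1 ↔ (z : ZMod m) = 0 := by
    intro z
    constructor
    · intro h
      have hdvd : ((orderOf C : ℤ)) ∣ z := orderOf_dvd_iff_zpow_eq_one.mpr h
      rw [horder] at hdvd
      exact (ZMod.intCast_zmod_eq_zero_iff_dvd z m).mpr hdvd
    · intro h
      have : C ^ z = C ^ (0 : ℤ) := zpc (by simpa using h)
      simpa using this
  have hCP : ∀ i j : ZMod m, C ^ (i.val : ℤ) = C ^ (j.val : ℤ) → i = j := by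
    intro i j h
    have h1 : C ^ ((i.val : ℤ) - j.val) = 1 := by
      rw [sub_eq_add_neg, zpow_add, h, ← zpow_add, add_neg_cancel, zpow_zero]
    have h2 := (zinj _).mp h1
    push_cast [hv] at h2
    linear_combination h2
  have hCAinj : Function.Injective (fun j : ZMod m => C ^ (j.val : ℤ) * A) := by
    intro i j h
    simp only [mul_left_inj] at h
    exact hCP i j h
  -- fixed point characterizations
  have fixCA : ∀ z : ℤ, (∃ x, (C ^ z * A) x = x) ↔ ∃ i : ZMod m, i + i = t + z := by
    intro z
    constructor
    · rintro ⟨x, hx⟩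
      obtain ⟨i, rfl⟩ := hesurj x
      rw [Perm.mul_apply, hAe i, hCe z] at hx
      have h2 := heinj hx
      exact ⟨i, by linear_combination -h2⟩
    · rintro ⟨i, hi⟩
      refine ⟨e i, ?_⟩
      rw [Perm.mul_apply, hAe i, hCe z]
      congr 1
      linear_combination -hi
  set R : Set (ZMod m) := Set.range (fun i => i + i) with hR
  set J : Set (ZMod m) := {j | t + j ∈ R} with hJ
  have hAfix : (∃ x, A x = x) ↔ t ∈ R := by
    have h0 := fixCA 0
    simp only [zpow_zero, one_mul, Int.cast_zero, add_zero] at h0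
    rw [h0]
    exact ⟨fun ⟨i, hi⟩ => ⟨i, hi⟩, fun ⟨i, hi⟩ => ⟨i, hi⟩⟩
  have hBfix : (∃ x, B x = x) ↔ t - 1 ∈ R := by
    have h0 := fixCA (-1)
    rw [← hBeq] at h0
    rw [h0]
    constructor
    · rintro ⟨i, hi⟩
      refine ⟨i, ?_⟩
      show i + i = t - 1
      rw [hi]
      push_cast
      ring
    · rintro ⟨i, hi⟩
      have hi' : i + i = t - 1 := hi
      refine ⟨i, ?_⟩
      rw [hi']
      push_cast
      ring
  -- the fixed-point set
  have hSeq : {p : Perm α | p ∈ H ∧ ∃ x, p x = x}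
      = insert 1 ((fun j : ZMod m => C ^ (j.val : ℤ) * A) '' J) := by
    ext p
    simp only [Set.mem_setOf_eq, Set.mem_insert_iff, Set.mem_image]
    constructor
    · rintro ⟨hpH, hfix⟩
      obtain ⟨z, hz | hz⟩ := hmem p hpH
      · left
        rw [hz] at hfix ⊢
        exact free z hfix
      · right
        refine ⟨(z : ZMod m), ?_, ?_⟩
        · show t + (z : ZMod m) ∈ R
          rw [hz] at hfix
          obtain ⟨i, hi⟩ := (fixCA z).mp hfix
          exact ⟨i, hi⟩
        · rw [hz]
          congr 1
          exact zpc (by push_cast [hv]; ring)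
    · rintro (rfl | ⟨j, hjJ, rfl⟩)
      · exact ⟨one_mem H, x₀, rfl⟩
      · refine ⟨mul_mem (zpow_mem hCH _) hAH, ?_⟩
        refine (fixCA _).mpr ?_
        obtain ⟨i, hi⟩ := hjJ
        have hi' : i + i = t + j := hi
        refine ⟨i, ?_⟩
        rw [hi']
        push_cast [hv]
        ring
  have h1notim : (1 : Perm α) ∉ (fun j : ZMod m => C ^ (j.val : ℤ) * A) '' J := by
    rintro ⟨j, _, hj⟩
    have h2 : (C ^ ((j.val : ℕ) : ℤ))⁻¹ = A := inv_eq_of_mul_eq_one_right hj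
    exact hAnC (-(j.val : ℤ)) (by rw [zpow_neg, h2])
  have hcardS : Nat.card {p : Perm α // p ∈ H ∧ ∃ x, p x = x} = 1 + J.ncard := by
    have h1 : Nat.card {p : Perm α // p ∈ H ∧ ∃ x, p x = x}
        = Set.ncard {p : Perm α | p ∈ H ∧ ∃ x, p x = x} :=
      Nat.card_coe_set_eq _
    rw [h1, hSeq, Set.ncard_insert_of_notMem h1notim (Set.toFinite _),
      Set.ncard_image_of_injective _ hCAinj, add_comm]
  have hJR : J.ncard = R.ncard := by
    have himg : J = (fun r => r - t) '' R := by
      ext j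
      constructor
      · intro hjJ
        exact ⟨t + j, hjJ, by ring⟩
      · rintro ⟨r, hr, rfl⟩
        show t + (r - t) ∈ R
        rw [show t + (r - t) = r from by ring]
        exact hr
    rw [himg, Set.ncard_image_of_injective _ sub_left_injective]
  have hsub : ∀ x ∈ R, ∀ y ∈ R, x - y ∈ R := by
    rintro x ⟨i, rfl⟩ y ⟨j, rfl⟩
    exact ⟨i - j, by ring⟩
  have hRodd : ¬ Even m → R = Set.univ := by
    intro hodd
    have hmod : m % 2 = 1 := Nat.odd_iff.mp (Nat.not_even_iff_odd.mp hodd)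
    have h2 : (2 * ((m + 1) / 2) : ℕ) = m + 1 := by omega
    apply Set.eq_univ_of_forall
    intro y
    refine ⟨(((m + 1) / 2 : ℕ) : ZMod m) * y, ?_⟩
    show (((m + 1) / 2 : ℕ) : ZMod m) * y + (((m + 1) / 2 : ℕ) : ZMod m) * y = y
    rw [show (((m + 1) / 2 : ℕ) : ZMod m) * y + (((m + 1) / 2 : ℕ) : ZMod m) * y
      = ((2 * ((m + 1) / 2) : ℕ) : ZMod m) * y from by push_cast; ring, h2]
    push_cast [ZMod.natCast_self]
    ring
  have hReven : Even m → R.ncard = m / 2 ∧ (∀ x : ZMod m, x ∈ R ∨ x - 1 ∈ R)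
      ∧ (1 : ZMod m) ∉ R := by
    intro heven
    have hm2 : (2 : ℕ) ∣ m := heven.two_dvd
    set φ : ZMod m →+ ZMod m := AddMonoidHom.mk' (fun i => i + i) (fun a b => by ring) with hφ
    have hRrange : R = (φ.range : Set (ZMod m)) := by
      ext x
      simp [hR, hφ, AddMonoidHom.mem_range]
    have hker : (φ.ker : Set (ZMod m)) = {0, ((m / 2 : ℕ) : ZMod m)} := by
      ext i
      simp only [SetLike.mem_coe, AddMonoidHom.mem_ker, hφ, AddMonoidHom.mk'_apply,
        Set.mem_insert_iff, Set.mem_singleton_iff]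
      constructor
      · intro hi
        have hv2 : ((i.val + i.val : ℕ) : ZMod m) = 0 := by
          push_cast [hv]
          exact hi
        have hdvd := (ZMod.natCast_eq_zero_iff _ _).mp hv2
        have hlt := ZMod.val_lt i
        obtain ⟨c, hc⟩ := hdvd
        have hc2 : c = 0 ∨ c = 1 := by
          rcases Nat.lt_or_ge c 2 with h | h
          · omega
          · exfalso
            nlinarith
        rcases hc2 with rfl | rfl
        · left
          rw [← hv i, show i.val = 0 from by omega]
          simp
        · right
          rw [← hv i, show i.val = m / 2 from by omega]
      · rintro (rfl | rfl)
        · simp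
        · show ((m / 2 : ℕ) : ZMod m) + ((m / 2 : ℕ) : ZMod m) = 0
          rw [← Nat.cast_add, show (m / 2 + m / 2 : ℕ) = m from by omega, ZMod.natCast_self]
    have hkercard : Nat.card φ.ker = 2 := by
      have h1 : Nat.card φ.ker = (φ.ker : Set (ZMod m)).ncard := Nat.card_coe_set_eq _
      rw [h1, hker, Set.ncard_pair]
      intro h0
      have hval : ((m / 2 : ℕ) : ZMod m).val = m / 2 := ZMod.val_cast_of_lt (by omega)
      rw [← h0, ZMod.val_zero] at hval
      omega
    have hquot := AddSubgroup.card_eq_card_quotient_mul_card_addSubgroup φ.ker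
    have hq2 : Nat.card (ZMod m ⧸ φ.ker) = Nat.card φ.range :=
      Nat.card_congr (QuotientAddGroup.quotientKerEquivRange φ).toEquiv
    rw [hq2, hkercard, Nat.card_zmod] at hquot
    have hRc0 : R.ncard = Nat.card φ.range := by
      rw [hRrange]
      exact (Nat.card_coe_set_eq _).symm
    have hRcard : R.ncard = m / 2 := by omega
    have h1R : (1 : ZMod m) ∉ R := by
      rintro ⟨i, hi⟩
      have hψ := congrArg (ZMod.castHom hm2 (ZMod 2)) hi
      rw [map_add, map_one] at hψ
      have hx : ∀ x : ZMod 2, x + x = 0 := by decide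
      rw [hx] at hψ
      exact (by decide : ¬ (0 : ZMod 2) = 1) hψ
    have hcover : ∀ x : ZMod m, x ∈ R ∨ x - 1 ∈ R := by
      intro x
      have hdisj : Disjoint R ((fun r => r + 1) '' R) := by
        rw [Set.disjoint_left]
        rintro a haR ⟨r, hrR, rfl⟩
        exact h1R (by simpa using hsub _ haR _ hrR)
      have hcardu : (R ∪ (fun r => r + 1) '' R).ncard = m := by
        rw [Set.ncard_union_eq hdisj (Set.toFinite _) (Set.toFinite _),
          Set.ncard_image_of_injective _ (add_left_injective 1), hRcard]
        omega
      have huniv : R ∪ (fun r => r + 1) '' R = Set.univ := by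
        apply Set.eq_of_subset_of_ncard_le (Set.subset_univ _)
        apply le_of_eq
        rw [Set.ncard_univ, Nat.card_zmod, hcardu]
      have hx : x ∈ R ∪ (fun r => r + 1) '' R := huniv ▸ Set.mem_univ x
      rcases hx with h | ⟨r, hr, hrx⟩
      · exact Or.inl h
      · right
        rw [← hrx]
        simpa using hr
    exact ⟨hRcard, hcover, h1R⟩
  -- cardinality of H
  have hmemH : ∀ (i : ZMod m) (bb : Bool),
      (if bb then C ^ (i.val : ℤ) * A else C ^ (i.val : ℤ)) ∈ H := by
    intro i bb
    cases bb
    · simpa using zpow_mem hCH _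
    · simpa using mul_mem (zpow_mem hCH _) hAH
  have hcardH : Nat.card H = 2 * m := by
    have hbij2 : Function.Bijective (fun p : ZMod m × Bool =>
        (⟨if p.2 then C ^ (p.1.val : ℤ) * A else C ^ (p.1.val : ℤ), hmemH p.1 p.2⟩ : H)) := by
      constructor
      · rintro ⟨i, bi⟩ ⟨j, bj⟩ hij
        rw [Subtype.mk.injEq] at hij
        cases bi <;> cases bj <;> simp only [if_true, if_false, Bool.false_eq_true] at hij ⊢
        · exact Prod.ext (hCP _ _ hij) rfl
        · exfalso
          have h2 : A = (C ^ ((j.val : ℤ)))⁻¹ * C ^ ((i.val : ℤ)) := by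
            rw [hij]
            group
          apply hAnC ((i.val : ℤ) - (j.val : ℤ))
          rw [h2, ← zpow_neg, ← zpow_add, neg_add_eq_sub]
        · exfalso
          have h2 : A = (C ^ ((i.val : ℤ)))⁻¹ * C ^ ((j.val : ℤ)) := by
            rw [← hij]
            group
          apply hAnC ((j.val : ℤ) - (i.val : ℤ))
          rw [h2, ← zpow_neg, ← zpow_add, neg_add_eq_sub]
        · exact Prod.ext (hCP _ _ (mul_right_cancel hij)) rfl
      · rintro ⟨p, hp⟩
        obtain ⟨z, hz | hz⟩ := hmem p hp
        · refine ⟨((z : ZMod m), false), Subtype.ext ?_⟩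
          show C ^ (((z : ZMod m).val : ℕ) : ℤ) = p
          rw [hz]
          exact zpc (by push_cast [hv]; ring)
        · refine ⟨((z : ZMod m), true), Subtype.ext ?_⟩
          show C ^ (((z : ZMod m).val : ℕ) : ℤ) * A = p
          rw [hz]
          congr 1
          exact zpc (by push_cast [hv]; ring)
    rw [← Nat.card_eq_of_bijective _ hbij2, Nat.card_prod, Nat.card_zmod]
    simp [Nat.card_eq_fintype_card]
    ring
  -- conclusions
  refine ⟨?_, hcardH, ?_, ?_⟩
  · rw [hcardS, hJR]
    by_cases heq : Even m
    · rw [if_pos heq, (hReven heq).1]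
    · rw [if_neg heq, hRodd heq, Set.ncard_univ, Nat.card_zmod]
  · intro hodd
    have hRuniv := hRodd (Nat.not_even_iff_odd.mpr hodd)
    exact ⟨hAfix.mpr (hRuniv ▸ Set.mem_univ _), hBfix.mpr (hRuniv ▸ Set.mem_univ _)⟩
  · intro heven
    obtain ⟨_, hcover, h1R⟩ := hReven heven
    rw [hAfix, hBfix]
    constructor
    · intro htR htR1
      have := hsub _ htR _ htR1
      rw [sub_sub_cancel] at this
      exact h1R this
    · intro hnt
      rcases hcover t with h | h
      · exact h
      · exact absurd h hnt


namespace TreeAut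

theorem fixed_of_prefix' {d : ℕ} (g : TreeAut d) {u v : List (Fin d)}
    (hu : (g : Equiv.Perm (List (Fin d))) u = u) (hvu : v <+: u) :
    (g : Equiv.Perm (List (Fin d))) v = v := by
  have h1 : (g : Equiv.Perm (List (Fin d))) v <+: u := by
    have h := (g.prefix_iff v u).mp hvu
    rwa [hu] at h
  have h2 : ((g : Equiv.Perm (List (Fin d))) v).length = v.length := g.length_apply v
  exact (List.prefix_of_prefix_length_le h1 hvu (le_of_eq h2)).eq_of_length h2

/-- auxiliary predicate for König's lemma: `v` is fixed and has arbitrarily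
long fixed extensions. -/
def GoodVert {d : ℕ} (g : TreeAut d) (v : List (Fin d)) : Prop :=
  (g : Equiv.Perm (List (Fin d))) v = v ∧
    ∀ n, ∃ u, v <+: u ∧ n ≤ u.length ∧ (g : Equiv.Perm (List (Fin d))) u = u

theorem exists_fixed_end {d : ℕ} (hd : 0 < d) (g : TreeAut d)
    (h : ∀ n : ℕ, ∃ v : List (Fin d), v.length = n ∧ (g : Equiv.Perm (List (Fin d))) v = v) :
    ∃ w : ℕ → Fin d, FixesEnd g w := by
  classical
  have good_nil : GoodVert g [] := by
    constructor
    · have hl := g.length_apply []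
      exact List.length_eq_zero_iff.mp hl
    · intro n
      obtain ⟨v, hv1, hv2⟩ := h n
      exact ⟨v, List.nil_prefix, le_of_eq hv1.symm, hv2⟩
  have step : ∀ v, GoodVert g v → ∃ x : Fin d, GoodVert g (v ++ [x]) := by
    intro v hv
    by_contra hno
    push_neg at hno
    have key : ∀ x : Fin d, ∃ Bx : ℕ, ∀ u, (v ++ [x]) <+: u →
        (g : Equiv.Perm (List (Fin d))) u = u → u.length < Bx := by
      intro x
      by_cases hfix : (g : Equiv.Perm (List (Fin d))) (v ++ [x]) = v ++ [x]
      · have hext : ¬ ∀ n, ∃ u, (v ++ [x]) <+: u ∧ n ≤ u.length ∧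
            (g : Equiv.Perm (List (Fin d))) u = u := fun hh => hno x ⟨hfix, hh⟩
        push_neg at hext
        obtain ⟨n, hn⟩ := hext
        refine ⟨n, fun u hpre hfixu => ?_⟩
        by_contra hlen
        push_neg at hlen
        exact hn u hpre hlen hfixu
      · exact ⟨0, fun u hpre hfixu => absurd (fixed_of_prefix' g hfixu hpre) hfix⟩
    choose Bf hB using key
    obtain ⟨u, hpre, hlen, hfix⟩ := hv.2 ((Finset.univ.sup Bf) + v.length + 1)
    obtain ⟨rest, hrest⟩ := hpre
    have hrest_ne : rest ≠ [] := by
      intro hr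
      have hvu : v.length = u.length := by rw [← hrest, hr, List.append_nil]
      omega
    obtain ⟨x, rest', rfl⟩ := List.exists_cons_of_ne_nil hrest_ne
    have hpre2 : (v ++ [x]) <+: u := ⟨rest', by rw [← hrest]; simp⟩
    have hlt := hB x u hpre2 hfix
    have hsup : Bf x ≤ Finset.univ.sup Bf := Finset.le_sup (Finset.mem_univ x)
    omega
  let f : {v : List (Fin d) // GoodVert g v} → {v : List (Fin d) // GoodVert g v} :=
    fun p => ⟨p.1 ++ [(step p.1 p.2).choose], (step p.1 p.2).choose_spec⟩
  let V : ℕ → {v : List (Fin d) // GoodVert g v} := fun n => f^[n] ⟨[], good_nil⟩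
  have hVsucc : ∀ n, V (n + 1) = f (V n) := fun n => Function.iterate_succ_apply' f n _
  have hVlen : ∀ n, (V n).1.length = n := by
    intro n
    induction n with
    | zero => rfl
    | succ k ih =>
      rw [hVsucc k]
      show ((V k).1 ++ [_]).length = k + 1
      rw [List.length_append, ih]
      rfl
  let w : ℕ → Fin d := fun n => (V (n + 1)).1.getLastD ⟨0, hd⟩
  have hw : ∀ n, (V (n + 1)).1 = (V n).1 ++ [w n] := by
    intro n
    have h1 : (V (n + 1)).1 = (V n).1 ++ [(step (V n).1 (V n).2).choose] := by
      rw [hVsucc n]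
    rw [h1]
    congr 1
    show _ = [(V (n + 1)).1.getLastD ⟨0, hd⟩]
    rw [h1, List.getLastD_concat]
  have hmap : ∀ n, (List.range n).map w = (V n).1 := by
    intro n
    induction n with
    | zero => rfl
    | succ k ih =>
      rw [List.range_succ, List.map_append, ih, hw k]
      rfl
  refine ⟨w, fun n => ?_⟩
  rw [hmap n]
  exact (V n).2.1

end TreeAut

/-- If `G ≤ Aut(X*)` is generated by distinct non-trivial involutions `a, b` with `ab`
spherically transitive, then `F(G) = r/4` where `r` is the number of elements of
`{a, b}` fixing at least one end of `X*`. -/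
theorem dihedral_fixedRatio {d : ℕ} (hd : 2 ≤ d) (a b : TreeAut d)
    (hab : a ≠ b) (ha1 : a ≠ 1) (hb1 : b ≠ 1)
    (ha2 : a * a = 1) (hb2 : b * b = 1)
    (hst : SphericallyTransitive (a * b)) :
    Filter.Tendsto (fixedRatio (Subgroup.closure ({a, b} : Set (TreeAut d))))
      Filter.atTop
      (nhds ((Set.ncard {g ∈ ({a, b} : Set (TreeAut d)) |
        ∃ w : ℕ → Fin d, TreeAut.FixesEnd g w} : ℝ) / 4)) := by
  classical
  set G := Subgroup.closure ({a, b} : Set (TreeAut d)) with hG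
  have hcardLevel : ∀ n : ℕ, Nat.card (Level d n) = d ^ n := by
    intro n
    have e : Level d n ≃ (Fin n → Fin d) := Equiv.vectorEquivFin (Fin d) n
    rw [Nat.card_congr e, Nat.card_fun, Nat.card_eq_fintype_card, Nat.card_eq_fintype_card]
    simp
  have hkey : ∀ n : ℕ, 2 ≤ n →
      (fixedRatio G n
        = ((1 : ℝ) + ((if Even d then d ^ n / 2 else d ^ n : ℕ) : ℝ)) / (2 * (d : ℝ) ^ n))
      ∧ (¬ Even d →
          (∃ v : List (Fin d), v.length = n ∧ (a : Equiv.Perm (List (Fin d))) v = v)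
          ∧ (∃ v : List (Fin d), v.length = n ∧ (b : Equiv.Perm (List (Fin d))) v = v))
      ∧ (Even d →
          ((∃ v : List (Fin d), v.length = n ∧ (a : Equiv.Perm (List (Fin d))) v = v)
          ↔ ¬ ∃ v : List (Fin d), v.length = n ∧ (b : Equiv.Perm (List (Fin d))) v = v)) := by
    intro n hn
    set A := levelHom d n a with hAdef
    set B := levelHom d n b with hBdef
    have hAA : A * A = 1 := by rw [hAdef, ← map_mul, ha2, map_one]
    have hBB : B * B = 1 := by rw [hBdef, ← map_mul, hb2, map_one]
    have hdn : 4 ≤ d ^ n := by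
      calc 4 = 2 ^ 2 := rfl
      _ ≤ d ^ 2 := Nat.pow_le_pow_left hd 2
      _ ≤ d ^ n := Nat.pow_le_pow_right (by omega) hn
    have hm3 : 3 ≤ Nat.card (Level d n) := by rw [hcardLevel n]; omega
    have htrans : ∀ x y : Level d n, ∃ k : ℤ, ((A * B) ^ k) x = y := by
      intro x y
      obtain ⟨k, hk⟩ := hst n (by omega) x.1 y.1 x.2 y.2
      refine ⟨k, ?_⟩
      have h1 : (A * B) ^ k = levelHom d n ((a * b) ^ k) := by
        rw [hAdef, hBdef, ← map_mul, ← map_zpow]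
      rw [h1]
      exact Subtype.ext hk
    obtain ⟨hc1, hc2, hodd, heven⟩ := dihedral_main A B hAA hBB hm3 htrans
    have hfixa : (∃ x : Level d n, A x = x) ↔
        (∃ v : List (Fin d), v.length = n ∧ (a : Equiv.Perm (List (Fin d))) v = v) := by
      constructor
      · rintro ⟨x, hx⟩
        exact ⟨x.1, x.2, congrArg Subtype.val hx⟩
      · rintro ⟨v, hv, hfix⟩
        exact ⟨⟨v, hv⟩, Subtype.ext hfix⟩
    have hfixb : (∃ x : Level d n, B x = x) ↔
        (∃ v : List (Fin d), v.length = n ∧ (b : Equiv.Perm (List (Fin d))) v = v) := by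
      constructor
      · rintro ⟨x, hx⟩
        exact ⟨x.1, x.2, congrArg Subtype.val hx⟩
      · rintro ⟨v, hv, hfix⟩
        exact ⟨⟨v, hv⟩, Subtype.ext hfix⟩
    have heqpow : Even (d ^ n) ↔ Even d := by
      rw [Nat.even_pow]
      exact ⟨fun h => h.1, fun h => ⟨h, by omega⟩⟩
    refine ⟨?_, ?_, ?_⟩
    · have hmapG : G.map (levelHom d n) = Subgroup.closure {A, B} := by
        rw [hG, MonoidHom.map_closure, Set.image_pair]
      rw [fixedRatio, hmapG, hc1, hc2, hcardLevel n]
      simp only [heqpow]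
      push_cast
      have hdpos : (0 : ℝ) < (d : ℝ) ^ n := by positivity
      field_simp
    · intro hnE
      have hOdd : Odd (Nat.card (Level d n)) := by
        rw [hcardLevel n, Nat.odd_iff, ← Nat.not_even_iff]
        rw [heqpow]
        exact hnE
      obtain ⟨hafix, hbfix⟩ := hodd hOdd
      exact ⟨hfixa.mp hafix, hfixb.mp hbfix⟩
    · intro hE
      have hEc : Even (Nat.card (Level d n)) := by
        rw [hcardLevel n, heqpow]
        exact hE
      exact hfixa.symm.trans ((heven hEc).trans (not_congr hfixb))
  have hdown : ∀ (g : TreeAut d) (k n : ℕ), k ≤ n →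
      (∃ v : List (Fin d), v.length = n ∧ (g : Equiv.Perm (List (Fin d))) v = v) →
      (∃ v : List (Fin d), v.length = k ∧ (g : Equiv.Perm (List (Fin d))) v = v) := by
    rintro g k n hkn ⟨v, hvl, hvf⟩
    refine ⟨v.take k, ?_, TreeAut.fixed_of_prefix' g hvf (List.take_prefix k v)⟩
    rw [List.length_take, hvl]
    omega
  have hof : ∀ (g : TreeAut d) (w : ℕ → Fin d), TreeAut.FixesEnd g w → ∀ n,
      ∃ v : List (Fin d), v.length = n ∧ (g : Equiv.Perm (List (Fin d))) v = v :=
    fun g w hw n => ⟨(List.range n).map w, by simp, hw n⟩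
  have hlimit : ∀ L : ℝ, (∀ n, 2 ≤ n → fixedRatio G n = 1 / (2 * (d : ℝ) ^ n) + L) →
      Filter.Tendsto (fixedRatio G) Filter.atTop (nhds L) := by
    intro L hL
    have hd1 : (1 : ℝ) < (d : ℝ) := by exact_mod_cast hd
    have h1 := tendsto_pow_atTop_atTop_of_one_lt hd1
    have h2 : Filter.Tendsto (fun n : ℕ => 2 * (d : ℝ) ^ n) Filter.atTop Filter.atTop :=
      h1.const_mul_atTop (by norm_num)
    have h3 := h2.inv_tendsto_atTop
    have h4 : Filter.Tendsto (fun n : ℕ => (2 * (d : ℝ) ^ n)⁻¹ + L) Filter.atTop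
        (nhds (0 + L)) := Filter.Tendsto.add_const L h3
    rw [zero_add] at h4
    refine Filter.Tendsto.congr' ?_ h4
    filter_upwards [Filter.eventually_ge_atTop 2] with n hn
    rw [hL n hn, one_div]
  have hdpow : ∀ n : ℕ, (0 : ℝ) < (d : ℝ) ^ n := by
    intro n
    have hd0 : (0 : ℝ) < (d : ℝ) := by
      have : 0 < d := by omega
      exact_mod_cast this
    positivity
  by_cases hEd : Even d
  · -- Even d : exactly one of a, b fixes an end
    have hncard : ({g ∈ ({a, b} : Set (TreeAut d)) |
        ∃ w : ℕ → Fin d, TreeAut.FixesEnd g w}).ncard = 1 := by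
      by_cases hall : ∀ n, ∃ v : List (Fin d), v.length = n ∧
          (a : Equiv.Perm (List (Fin d))) v = v
      · have hSa : {g ∈ ({a, b} : Set (TreeAut d)) | ∃ w : ℕ → Fin d, TreeAut.FixesEnd g w}
            = {a} := by
          ext g
          simp only [Set.mem_setOf_eq, Set.mem_insert_iff, Set.mem_singleton_iff]
          constructor
          · rintro ⟨(rfl | rfl), w, hw⟩
            · rfl
            · exact absurd (hof g w hw 2) ((hkey 2 le_rfl).2.2 hEd |>.mp (hall 2))
          · rintro rfl
            exact ⟨Or.inl rfl, TreeAut.exists_fixed_end (by omega) _ hall⟩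
        rw [hSa, Set.ncard_singleton]
      · push_neg at hall
        obtain ⟨n₀, hn₀⟩ := hall
        have hnota : ¬ ∃ v : List (Fin d), v.length = n₀ ∧
            (a : Equiv.Perm (List (Fin d))) v = v := by
          rintro ⟨v, h1, h2⟩
          exact hn₀ v h1 h2
        have hball : ∀ k, ∃ v : List (Fin d), v.length = k ∧
            (b : Equiv.Perm (List (Fin d))) v = v := by
          intro k
          set N := max (max k n₀) 2 with hN
          have h2N : 2 ≤ N := le_max_right _ _
          have hnotaN : ¬ ∃ v : List (Fin d), v.length = N ∧
              (a : Equiv.Perm (List (Fin d))) v = v := by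
            intro hcon
            exact hnota (hdown a n₀ N (le_trans (le_max_right k n₀) (le_max_left _ 2)) hcon)
          have hbN : ∃ v : List (Fin d), v.length = N ∧
              (b : Equiv.Perm (List (Fin d))) v = v := by
            by_contra hq
            exact hnotaN (((hkey N h2N).2.2 hEd).mpr hq)
          exact hdown b k N (le_trans (le_max_left k n₀) (le_max_left _ 2)) hbN
        have hSb : {g ∈ ({a, b} : Set (TreeAut d)) | ∃ w : ℕ → Fin d, TreeAut.FixesEnd g w}
            = {b} := by
          ext g
          simp only [Set.mem_setOf_eq, Set.mem_insert_iff, Set.mem_singleton_iff]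
          constructor
          · rintro ⟨(rfl | rfl), w, hw⟩
            · exact absurd (hof g w hw n₀) hnota
            · rfl
          · rintro rfl
            exact ⟨Or.inr rfl, TreeAut.exists_fixed_end (by omega) _ hball⟩
        rw [hSb, Set.ncard_singleton]
    rw [hncard]
    have hone : ((1 : ℕ) : ℝ) / 4 = 1 / 4 := by norm_num
    rw [hone]
    apply hlimit
    intro n hn
    rw [(hkey n hn).1]
    have h2dvd : 2 ∣ d ^ n := (Nat.even_pow.mpr ⟨hEd, by omega⟩).two_dvd
    rw [if_pos hEd, Nat.cast_div h2dvd (by norm_num)]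
    have := hdpow n
    push_cast
    field_simp
    ring
  · -- Odd d : both a and b fix ends
    have hafix : ∀ k, ∃ v : List (Fin d), v.length = k ∧
        (a : Equiv.Perm (List (Fin d))) v = v := by
      intro k
      exact hdown a k (max k 2) (le_max_left _ _)
        (((hkey (max k 2) (le_max_right _ _)).2.1 hEd).1)
    have hbfix : ∀ k, ∃ v : List (Fin d), v.length = k ∧
        (b : Equiv.Perm (List (Fin d))) v = v := by
      intro k
      exact hdown b k (max k 2) (le_max_left _ _)
        (((hkey (max k 2) (le_max_right _ _)).2.1 hEd).2)
    have hncard : ({g ∈ ({a, b} : Set (TreeAut d)) |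
        ∃ w : ℕ → Fin d, TreeAut.FixesEnd g w}).ncard = 2 := by
      have hSab : {g ∈ ({a, b} : Set (TreeAut d)) | ∃ w : ℕ → Fin d, TreeAut.FixesEnd g w}
          = {a, b} := by
        ext g
        simp only [Set.mem_setOf_eq, Set.mem_insert_iff, Set.mem_singleton_iff]
        constructor
        · rintro ⟨hg, _⟩
          exact hg
        · rintro (rfl | rfl)
          · exact ⟨Or.inl rfl, TreeAut.exists_fixed_end (by omega) g hafix⟩
          · exact ⟨Or.inr rfl, TreeAut.exists_fixed_end (by omega) g hbfix⟩
      rw [hSab, Set.ncard_pair hab]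
    rw [hncard]
    have htwo : ((2 : ℕ) : ℝ) / 4 = 1 / 2 := by norm_num
    rw [htwo]
    apply hlimit
    intro n hn
    rw [(hkey n hn).1, if_neg hEd]
    have := hdpow n
    push_cast
    field_simp
end Main
end
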